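/- If a ∈ (0, ∞), then v0(a) > 0, the real number v0(a) belongs to Λ_a and is a simple zero of h_a (i.e. h_a'(v0(a)) ≠ 0), v0(a) is the only element of Λ_a with real part equal to v0(a), and v1(a) := sup{Re(λ) : λ ∈ Λ_a, Re(λ) < v0(a)} < 0, i.e. every root other than v0(a) has strictly negative real part bounded away from 0. -/

import Mathlib

open MeasureTheory

/-- The characteristic function `h_a(λ) = λ − a ∫_{−1}^0 e^{λu} du`. -/
noncomputable def charFn (a : ℝ) (lam : ℂ) : ℂ :=
  lam - a * ∫ u in (-1:ℝ)..0, Complex.exp (lam * u)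

/-- The set `Λ_a` of complex solutions of the characteristic equation. -/
def charRoots (a : ℝ) : Set ℂ := {lam | charFn a lam = 0}

/-- `v₀(a) = sup{Re λ : λ ∈ Λ_a}`. -/
noncomputable def v0 (a : ℝ) : ℝ := sSup (Complex.re '' charRoots a)

/-- `v₁(a) = sup{Re λ : λ ∈ Λ_a, Re λ < v₀(a)}`. -/
noncomputable def v1 (a : ℝ) : ℝ :=
  sSup {x : ℝ | ∃ lam ∈ charRoots a, lam.re = x ∧ x < v0 a}

lemma aux_integral {lam : ℂ} (h : lam ≠ 0) :
    (∫ u in (-1:ℝ)..0, Complex.exp (lam * u)) = (1 - Complex.exp (-lam)) / lam := by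
  rw [integral_exp_mul_complex h]
  norm_num

lemma charFn_eq (a : ℝ) {lam : ℂ} (h : lam ≠ 0) :
    charFn a lam = lam - a * ((1 - Complex.exp (-lam)) / lam) := by
  rw [charFn, aux_integral h]

lemma charFn_zero (a : ℝ) : charFn a 0 = -a := by
  simp [charFn]

lemma mem_charRoots_iff {a : ℝ} (ha : 0 < a) {lam : ℂ} :
    lam ∈ charRoots a ↔ lam ≠ 0 ∧ lam ^ 2 = a * (1 - Complex.exp (-lam)) := by
  constructor
  · intro hmem
    have h0 : lam ≠ 0 := by
      rintro rfl
      have : (-a : ℂ) = 0 := by rw [← charFn_zero a]; exact hmem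
      simp at this
      exact ha.ne' this
    refine ⟨h0, ?_⟩
    have h1 : charFn a lam = 0 := hmem
    rw [charFn_eq a h0, sub_eq_zero] at h1
    field_simp at h1
    rw [sq]; linear_combination h1
  · rintro ⟨h0, heq⟩
    show charFn a lam = 0
    rw [charFn_eq a h0, sub_eq_zero]
    field_simp
    rw [sq] at heq; linear_combination heq

lemma exists_x0 {a : ℝ} (ha : 0 < a) :
    ∃ x : ℝ, 0 < x ∧ x ^ 2 = a * (1 - Real.exp (-x)) := by
  set g : ℝ → ℝ := fun x => x ^ 2 - a * (1 - Real.exp (-x)) with hg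
  have hc : Continuous g := by fun_prop
  set x1 := min 1 (a/4) with hx1
  have hx1pos : 0 < x1 := lt_min one_pos (by linarith)
  have hx1le1 : x1 ≤ 1 := min_le_left _ _
  have hx1lea : x1 ≤ a/4 := min_le_right _ _
  have h1 : Real.exp (-x1) ≤ 1 - x1/2 := by
    have h2 : x1 + 1 ≤ Real.exp x1 := Real.add_one_le_exp x1
    rw [Real.exp_neg]
    rw [inv_le_iff_one_le_mul₀ (Real.exp_pos x1)]
    nlinarith [Real.exp_pos x1]
  have hgx1 : g x1 < 0 := by
    have : 1 - Real.exp (-x1) ≥ x1/2 := by linarith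
    have : a * (1 - Real.exp (-x1)) ≥ a * (x1/2) := by nlinarith
    simp only [hg]
    nlinarith
  set x2 := Real.sqrt a + 1 with hx2
  have hx2sq : x2 ^ 2 = a + 2 * Real.sqrt a + 1 := by
    have := Real.sq_sqrt ha.le
    ring_nf
    nlinarith [Real.sqrt_nonneg a]
  have hgx2 : 0 ≤ g x2 := by
    have he : Real.exp (-x2) > 0 := Real.exp_pos _
    have : a * (1 - Real.exp (-x2)) ≤ a := by nlinarith
    simp only [hg]
    nlinarith [Real.sqrt_nonneg a]
  have hle : x1 ≤ x2 := by nlinarith [Real.sqrt_nonneg a]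
  have := intermediate_value_Icc hle hc.continuousOn
  have h0 : (0:ℝ) ∈ Set.Icc (g x1) (g x2) := ⟨hgx1.le, hgx2⟩
  obtain ⟨x, hx, hgx⟩ := this h0
  exact ⟨x, lt_of_lt_of_le hx1pos hx.1, by simp only [hg] at hgx; linarith⟩

lemma real_integral_exp {x : ℝ} (hx : x ≠ 0) :
    (∫ u in (-1:ℝ)..0, Real.exp (x * u)) = (1 - Real.exp (-x)) / x := by
  have h : ((∫ u in (-1:ℝ)..0, Real.exp (x * u) : ℝ) : ℂ)
      = ((1 - Real.exp (-x)) / x : ℝ) := by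
    rw [← intervalIntegral.integral_ofReal]
    have : ∀ u : ℝ, ((Real.exp (x * u) : ℝ) : ℂ) = Complex.exp ((x:ℂ) * u) := by
      intro u
      rw [Complex.ofReal_exp]
      norm_cast
    simp_rw [this]
    rw [integral_exp_mul_complex (by exact_mod_cast hx)]
    push_cast [Real.exp_neg, Complex.exp_neg]
    norm_num
    rw [Complex.exp_neg]
  exact_mod_cast h

lemma integral_exp_mono {x y : ℝ} (h : x ≤ y) :
    (∫ u in (-1:ℝ)..0, Real.exp (y * u)) ≤ ∫ u in (-1:ℝ)..0, Real.exp (x * u) := by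
  apply intervalIntegral.integral_mono_on (by norm_num)
  · exact (by fun_prop : Continuous fun u : ℝ => Real.exp (y * u)).intervalIntegrable _ _
  · exact (by fun_prop : Continuous fun u : ℝ => Real.exp (x * u)).intervalIntegrable _ _
  · intro u hu
    apply Real.exp_le_exp.2
    nlinarith [hu.1, hu.2]

lemma root_eq_integral {a : ℝ} {lam : ℂ} (h : lam ∈ charRoots a) :
    lam = a * ∫ u in (-1:ℝ)..0, Complex.exp (lam * u) := by
  have : charFn a lam = 0 := h
  rw [charFn, sub_eq_zero] at this
  exact this

lemma root_abs_le {a : ℝ} (ha : 0 < a) {lam : ℂ} (h : lam ∈ charRoots a) :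
    ‖lam‖ ≤ a * ∫ u in (-1:ℝ)..0, Real.exp (lam.re * u) := by
  calc ‖lam‖ = ‖((a:ℂ) * ∫ u in (-1:ℝ)..0, Complex.exp (lam * u))‖ := by
        rw [← root_eq_integral h]
    _ = a * ‖∫ u in (-1:ℝ)..0, Complex.exp (lam * u)‖ := by
        rw [norm_mul]
        simp [Complex.norm_real, abs_of_pos ha]
    _ ≤ a * ∫ u in (-1:ℝ)..0, ‖Complex.exp (lam * u)‖ := by
        have hn := intervalIntegral.norm_integral_le_integral_norm
          (f := fun u : ℝ => Complex.exp (lam * u)) (μ := volume) (a := (-1:ℝ)) (b := 0)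
          (by norm_num)
        exact mul_le_mul_of_nonneg_left hn ha.le
    _ = a * ∫ u in (-1:ℝ)..0, Real.exp (lam.re * u) := by
        congr 1
        apply intervalIntegral.integral_congr
        intro u _
        simp [Complex.norm_exp, Complex.mul_re]

lemma intervalIntegral_im {f : ℝ → ℂ} {a b : ℝ} (hf : IntervalIntegrable f volume a b) :
    (∫ u in a..b, f u).im = ∫ u in a..b, (f u).im := by
  simp only [intervalIntegral, Complex.sub_im]
  rw [← RCLike.im_to_complex (x := ∫ x in Set.Ioc a b, f x ∂volume),
    ← RCLike.im_to_complex (x := ∫ x in Set.Ioc b a, f x ∂volume),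
    ← integral_im hf.1, ← integral_im hf.2]
  simp

lemma root_im_eq {a : ℝ} {lam : ℂ} (h : lam ∈ charRoots a) :
    lam.im = a * ∫ u in (-1:ℝ)..0, Real.exp (lam.re * u) * Real.sin (lam.im * u) := by
  have h1 := root_eq_integral h
  have hint : IntervalIntegrable (fun u : ℝ => Complex.exp (lam * u)) volume (-1) 0 :=
    (by fun_prop : Continuous fun u : ℝ => Complex.exp (lam * u)).intervalIntegrable _ _
  have h2 : lam.im = ((a:ℂ) * ∫ u in (-1:ℝ)..0, Complex.exp (lam * u)).im := by
    rw [← h1]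
  rw [Complex.mul_im] at h2
  simp only [Complex.ofReal_re, Complex.ofReal_im, zero_mul, add_zero] at h2
  rw [intervalIntegral_im hint] at h2
  conv_lhs => rw [h2]
  congr 1
  apply intervalIntegral.integral_congr
  intro u _
  simp [Complex.exp_im, Complex.mul_re, Complex.mul_im]

lemma root_im_not_small {a : ℝ} (ha : 0 < a) {lam : ℂ} (h : lam ∈ charRoots a)
    (h1 : 0 < lam.im) : Real.pi < lam.im := by
  by_contra hle
  push_neg at hle
  have hI : (∫ u in (-1:ℝ)..0, Real.exp (lam.re * u) * Real.sin (lam.im * u)) ≤ 0 := by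
    rw [← neg_nonneg, ← intervalIntegral.integral_neg]
    apply intervalIntegral.integral_nonneg (by norm_num)
    intro u hu
    have hs : Real.sin (lam.im * u) ≤ 0 := by
      apply Real.sin_nonpos_of_nonpos_of_neg_pi_le
      · nlinarith [hu.1, hu.2]
      · nlinarith [hu.1, hu.2]
    nlinarith [Real.exp_pos (lam.re * u)]
  have h2 := root_im_eq h
  nlinarith

lemma conj_root {a : ℝ} (ha : 0 < a) {lam : ℂ} (h : lam ∈ charRoots a) :
    (starRingEnd ℂ) lam ∈ charRoots a := by
  rw [mem_charRoots_iff ha] at h ⊢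
  obtain ⟨h0, heq⟩ := h
  refine ⟨by simpa using h0, ?_⟩
  have := congrArg (starRingEnd ℂ) heq
  simpa [← Complex.exp_conj, map_pow] using this

lemma root_re_im_eqs {a : ℝ} (ha : 0 < a) {lam : ℂ} (h : lam ∈ charRoots a) :
    lam.re ^ 2 - lam.im ^ 2 = a * (1 - Real.exp (-lam.re) * Real.cos lam.im) ∧
      2 * lam.re * lam.im = a * (Real.exp (-lam.re) * Real.sin lam.im) := by
  obtain ⟨h0, heq⟩ := (mem_charRoots_iff ha).1 h
  rw [Complex.ext_iff] at heq
  obtain ⟨hre, him⟩ := heq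
  constructor
  · simpa [pow_two, Complex.mul_re, Complex.mul_im, Complex.exp_re, Complex.exp_im,
      Complex.sub_re, Complex.sub_im, Real.cos_neg, Real.sin_neg] using hre
  · have him' : lam.re * lam.im + lam.im * lam.re
        = a * (Real.exp (-lam.re) * Real.sin lam.im) := by
      simpa [pow_two, Complex.mul_re, Complex.mul_im, Complex.exp_re, Complex.exp_im,
        Complex.sub_re, Complex.sub_im, Real.cos_neg, Real.sin_neg] using him
    linarith

lemma exp_ge_quarter_sq {x : ℝ} (hx : 0 ≤ x) : x ^ 2 / 4 ≤ Real.exp x := by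
  have h1 : x / 2 + 1 ≤ Real.exp (x / 2) := Real.add_one_le_exp _
  have h2 : Real.exp (x / 2) * Real.exp (x / 2) = Real.exp x := by
    rw [← Real.exp_add]; ring_nf
  nlinarith

lemma no_root_re_nonneg_im_pos {a : ℝ} (ha : 0 < a) {lam : ℂ} (h : lam ∈ charRoots a)
    (hre : 0 ≤ lam.re) (him : 0 < lam.im) : False := by
  have hpi := root_im_not_small ha h him
  obtain ⟨he1, he2⟩ := root_re_im_eqs ha h
  set x := lam.re with hx
  set y := lam.im with hy
  set E := Real.exp (-x) with hE
  have hEpos : 0 < E := Real.exp_pos _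
  have hE1 : E ≤ 1 := Real.exp_le_one_iff.2 (by linarith)
  have hcos := Real.cos_le_one y
  have hcos' := Real.neg_one_le_cos y
  have hpi3 := Real.pi_gt_three
  have haE : 0 < a * E := mul_pos ha hEpos
  rcases eq_or_lt_of_le hre with hx0 | hx0
  · -- x = 0 : E = 1, -y^2 = a (1 - cos y) ≥ 0, contradiction
    have hEe : E = 1 := by rw [hE, ← hx0]; simp
    rw [hEe] at he1
    nlinarith
  · -- x > 0
    have hsin : 0 < Real.sin y := by
      by_contra hc
      push_neg at hc
      have h2xy : 0 < 2 * x * y := by positivity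
      nlinarith [mul_nonpos_of_nonneg_of_nonpos haE.le hc]
    have hy2pi : 2 * Real.pi < y := by
      by_contra hc
      push_neg at hc
      have hs : Real.sin y ≤ 0 := by
        have hyy : y = (y - Real.pi) + Real.pi := by ring
        rw [hyy, Real.sin_add_pi]
        have : 0 ≤ Real.sin (y - Real.pi) :=
          Real.sin_nonneg_of_nonneg_of_le_pi (by linarith) (by linarith)
        linarith
      linarith
    have hcosE : a * (E * Real.cos y) ≤ a * E := by nlinarith
    have hxy : y ≤ x := by nlinarith
    have hx6 : 6 < x := by nlinarith
    have hEhalf : E ≤ 1 / 2 := by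
      rw [hE, Real.exp_neg]
      rw [inv_le_iff_one_le_mul₀ (Real.exp_pos x)]
      nlinarith [Real.add_one_le_exp x]
    have hEx2 : E * x ^ 2 ≤ 4 := by
      rw [hE, Real.exp_neg]
      have h4 := exp_ge_quarter_sq (le_of_lt (by linarith : (0:ℝ) < x))
      rw [inv_mul_le_iff₀ (Real.exp_pos x)]
      nlinarith
    have ha2 : a ≤ 2 * x ^ 2 := by nlinarith
    have hsin1 : Real.sin y ≤ 1 := Real.sin_le_one y
    have h8 : a * (E * Real.sin y) ≤ 8 := by nlinarith
    nlinarith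

lemma real_root_facts {a : ℝ} (ha : 0 < a) {x : ℝ} (h : (x:ℂ) ∈ charRoots a) :
    0 < x ∧ x ^ 2 = a * (1 - Real.exp (-x)) := by
  obtain ⟨h0, heq⟩ := (mem_charRoots_iff ha).1 h
  have hx0 : x ≠ 0 := by exact_mod_cast h0
  have heqr : x ^ 2 = a * (1 - Real.exp (-x)) := by
    have : ((x ^ 2 : ℝ) : ℂ) = ((a * (1 - Real.exp (-x)) : ℝ) : ℂ) := by
      push_cast [Complex.ofReal_exp]
      exact heq
    exact_mod_cast this
  refine ⟨?_, heqr⟩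
  rcases lt_or_gt_of_ne hx0 with hneg | hpos
  · exfalso
    have : 1 < Real.exp (-x) := by
      rw [← Real.exp_zero]
      exact Real.exp_lt_exp.2 (by linarith)
    nlinarith [sq_nonneg x, (by positivity : (0:ℝ) < x ^ 2)]
  · exact hpos

lemma real_root_fixed {a : ℝ} (ha : 0 < a) {x : ℝ} (h : (x:ℂ) ∈ charRoots a) :
    x = a * ∫ u in (-1:ℝ)..0, Real.exp (x * u) := by
  obtain ⟨hpos, heq⟩ := real_root_facts ha h
  rw [real_integral_exp hpos.ne']
  field_simp
  nlinarith

lemma real_root_unique {a : ℝ} (ha : 0 < a) {x x' : ℝ}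
    (h : (x:ℂ) ∈ charRoots a) (h' : ((x':ℝ):ℂ) ∈ charRoots a) : x = x' := by
  have key : ∀ z z' : ℝ, (z:ℂ) ∈ charRoots a → ((z':ℝ):ℂ) ∈ charRoots a → z < z' → False := by
    intro z z' hz hz' hlt
    have h1 := real_root_fixed ha hz
    have h2 := real_root_fixed ha hz'
    have h3 := integral_exp_mono hlt.le
    nlinarith
  rcases lt_trichotomy x x' with hlt | heq | hgt
  · exact absurd hlt (fun hl => (key _ _ h h' hl).elim)
  · exact heq
  · exact absurd hgt (fun hl => (key _ _ h' h hl).elim)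

lemma roots_re_le {a : ℝ} (ha : 0 < a) {x0 : ℝ} (h0 : (x0:ℂ) ∈ charRoots a)
    {lam : ℂ} (h : lam ∈ charRoots a) : lam.re ≤ x0 := by
  obtain ⟨hx0pos, _⟩ := real_root_facts ha h0
  by_contra hgt
  push_neg at hgt
  have h1 : lam.re ≤ ‖lam‖ := Complex.re_le_norm lam
  have h2 := root_abs_le ha h
  have h3 := integral_exp_mono hgt.le
  have h4 := real_root_fixed ha h0
  nlinarith

lemma root_on_line_eq {a : ℝ} (ha : 0 < a) {x0 : ℝ} (h0 : (x0:ℂ) ∈ charRoots a)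
    {lam : ℂ} (h : lam ∈ charRoots a) (hre : lam.re = x0) : lam = (x0:ℂ) := by
  obtain ⟨hx0pos, _⟩ := real_root_facts ha h0
  have h2 := root_abs_le ha h
  rw [hre] at h2
  rw [← real_root_fixed ha h0] at h2
  have habs : ‖lam‖ ^ 2 = x0 ^ 2 + lam.im ^ 2 := by
    rw [Complex.sq_norm, Complex.normSq_apply, hre]; ring
  have : lam.im ^ 2 ≤ 0 := by nlinarith [norm_nonneg lam]
  have him : lam.im = 0 := by nlinarith [sq_nonneg lam.im]
  apply Complex.ext
  · simpa using hre
  · simpa using him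

lemma deriv_charFn_ne {a : ℝ} (ha : 0 < a) {x0 : ℝ} (h0 : (x0:ℂ) ∈ charRoots a) :
    deriv (charFn a) (x0:ℂ) ≠ 0 := by
  obtain ⟨hx0pos, heqr⟩ := real_root_facts ha h0
  have hne : (x0:ℂ) ≠ 0 := by exact_mod_cast hx0pos.ne'
  set G : ℂ → ℂ := fun lam => lam - a * ((1 - Complex.exp (-lam)) / lam) with hG
  have hev : charFn a =ᶠ[nhds (x0:ℂ)] G := by
    filter_upwards [isOpen_ne.mem_nhds hne] with z hz
    exact charFn_eq a hz
  rw [hev.deriv_eq]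
  -- compute the derivative of G at x0
  have h1 : HasDerivAt (fun lam : ℂ => 1 - Complex.exp (-lam)) (Complex.exp (-(x0:ℂ))) (x0:ℂ) := by
    have hexp : HasDerivAt (fun lam : ℂ => Complex.exp (-lam))
        (Complex.exp (-(x0:ℂ)) * -1) (x0:ℂ) :=
      (Complex.hasDerivAt_exp (-(x0:ℂ))).comp _ (hasDerivAt_neg _)
    have := hexp.const_sub 1
    simpa using this
  have h2 : HasDerivAt (fun lam : ℂ => (1 - Complex.exp (-lam)) / lam)
      ((Complex.exp (-(x0:ℂ)) * (x0:ℂ) - (1 - Complex.exp (-(x0:ℂ))) * 1) / (x0:ℂ) ^ 2)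
      (x0:ℂ) := h1.div (hasDerivAt_id _) hne
  have h3 : HasDerivAt G
      (1 - a * ((Complex.exp (-(x0:ℂ)) * (x0:ℂ) - (1 - Complex.exp (-(x0:ℂ))) * 1) / (x0:ℂ) ^ 2))
      (x0:ℂ) := by
    exact (hasDerivAt_id ((x0:ℂ))).sub (h2.const_mul (a:ℂ))
  rw [h3.deriv]
  -- express as a real number
  set E := Real.exp (-x0) with hEdef
  have hcast : (1 : ℂ) - a * ((Complex.exp (-(x0:ℂ)) * (x0:ℂ) - (1 - Complex.exp (-(x0:ℂ))) * 1) / (x0:ℂ) ^ 2)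
      = ((1 - a * ((E * x0 - (1 - E)) / x0 ^ 2) : ℝ) : ℂ) := by
    have : Complex.exp (-(x0:ℂ)) = ((E : ℝ) : ℂ) := by
      rw [hEdef, Complex.ofReal_exp]
      norm_cast
    rw [this]
    push_cast
    ring
  rw [hcast]
  rw [Ne, Complex.ofReal_eq_zero]
  -- show the real quantity is positive
  have hEpos : 0 < E := Real.exp_pos _
  have hE1 : E < 1 := by
    rw [hEdef, ← Real.exp_zero]
    exact Real.exp_lt_exp.2 (by linarith)
  have hX := Real.add_one_le_exp x0
  have hEX : E * Real.exp x0 = 1 := by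
    rw [hEdef, ← Real.exp_add]
    simp
  have haE : a * E < 2 * x0 := by
    nlinarith [Real.exp_pos x0, mul_pos hx0pos hEpos]
  have hpos : 0 < 1 - a * ((E * x0 - (1 - E)) / x0 ^ 2) := by
    rw [sub_pos, mul_div_assoc']
    rw [div_lt_iff₀ (by positivity : (0:ℝ) < x0 ^ 2)]
    nlinarith
  exact ne_of_gt hpos

lemma log_le_two_sqrt {x : ℝ} (hx : 1 ≤ x) : Real.log x ≤ 2 * Real.sqrt x := by
  have hs : 0 < Real.sqrt x := Real.sqrt_pos.2 (by linarith)
  have h1 : Real.log (Real.sqrt x) ≤ Real.sqrt x - 1 := Real.log_le_sub_one_of_pos hs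
  have h2 : Real.log (Real.sqrt x) = Real.log x / 2 := Real.log_sqrt (by linarith)
  linarith

lemma exists_K {a : ℝ} (ha : 0 < a) :
    ∃ K : ℝ, (∃ k : ℕ, K = 2 * Real.pi * k) ∧ 64 ≤ K ∧
      2 ≤ Real.log (1 + K ^ 2 / a) ∧ 64 * Real.log (1 + K ^ 2 / a) ≤ 3 * K := by
  set C := Real.log (1 + 1 / a) with hC
  have hCnn : 0 ≤ C := Real.log_nonneg (le_add_of_nonneg_right (by positivity))
  obtain ⟨k, hk⟩ := exists_nat_ge (10 * a + 60000 + 43 * C)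
  set K : ℝ := 2 * Real.pi * k with hK
  have hpi := Real.pi_gt_three
  have hkk : (k : ℝ) ≤ K := by
    have : (1:ℝ) * k ≤ (2 * Real.pi) * k := by
      apply mul_le_mul_of_nonneg_right (by linarith) (Nat.cast_nonneg k)
    linarith
  have hK6 : 60000 ≤ K := by linarith
  have hKC : 43 * C ≤ K := by linarith
  have hKa : 10 * a ≤ K := by linarith
  refine ⟨K, ⟨k, rfl⟩, by linarith, ?_, ?_⟩
  · -- 2 ≤ L
    rw [Real.le_log_iff_exp_le (by positivity)]
    have he : Real.exp 1 < 2.7182818286 := Real.exp_one_lt_d9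
    have h2 : Real.exp 2 = Real.exp 1 * Real.exp 1 := by
      rw [← Real.exp_add]; norm_num
    have hexp2 : Real.exp 2 ≤ 11 := by nlinarith [Real.exp_pos 1]
    have hK2 : 10 * a ≤ K ^ 2 := by nlinarith
    have : (10:ℝ) ≤ K ^ 2 / a := by rw [le_div_iff₀ ha]; linarith
    linarith
  · -- 64 L ≤ 3 K
    set L := Real.log (1 + K ^ 2 / a) with hL
    have l1 : L ≤ Real.log ((1 + K ^ 2) * (1 + 1 / a)) := by
      apply Real.log_le_log (by positivity)
      have h1a : 0 < 1/a := by positivity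
      have expand : (1 + K ^ 2) * (1 + 1/a) = 1 + K ^ 2 / a + (1/a + K ^ 2) := by
        field_simp; ring
      nlinarith [sq_nonneg K]
    have l2 : Real.log ((1 + K ^ 2) * (1 + 1 / a)) = Real.log (1 + K ^ 2) + C := by
      rw [Real.log_mul (by positivity) (by positivity)]
    have l3 : Real.log (1 + K ^ 2) ≤ 2 * Real.log (1 + K) := by
      have : Real.log ((1 + K) ^ 2) = 2 * Real.log (1 + K) := by
        rw [Real.log_pow]; norm_num
      rw [← this]
      apply Real.log_le_log (by positivity)
      nlinarith
    have l4 : Real.log (1 + K) ≤ 2 * Real.sqrt (1 + K) := log_le_two_sqrt (by linarith)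
    set s := Real.sqrt (1 + K) with hs
    have hs2 : s ^ 2 = 1 + K := Real.sq_sqrt (by linarith)
    have hs240 : 240 ≤ s := by
      nlinarith [Real.sqrt_nonneg (1 + K)]
    have l5 : 256 * s ≤ (3 * K) / 2 := by nlinarith
    have l6 : 64 * C ≤ (3 * K) / 2 := by linarith
    nlinarith

lemma exists_neg_root {a : ℝ} (ha : 0 < a) :
    ∃ lam ∈ charRoots a, lam.re ≤ -1 := by
  obtain ⟨K, ⟨k, hKk⟩, hK64, hL2, hL64⟩ := exists_K ha
  set L : ℝ := Real.log (1 + K ^ 2 / a) with hLdef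
  -- basic consequences
  have hL1 : L + 1 ≤ K / 2 := by linarith
  have hK0 : 0 < K := by linarith
  -- the auxiliary holomorphic data
  set w : ℂ → ℂ := fun z => 1 - z ^ 2 / (a : ℂ) with hw
  set T : ℂ → ℂ := fun z => -Complex.log (w z) - K * Complex.I with hT
  set E : Set ℂ := {z : ℂ | -(L + 1) ≤ z.re ∧ z.re ≤ 0 ∧ |z.im + K| ≤ 1} with hE
  have hEconv : Convex ℝ E := by
    have : E = {z : ℂ | -(L + 1) ≤ z.re} ∩ ({z : ℂ | z.re ≤ 0} ∩
        ({z : ℂ | z.im ≤ 1 - K} ∩ {z : ℂ | -1 - K ≤ z.im})) := by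
      ext z
      simp only [hE, Set.mem_setOf_eq, Set.mem_inter_iff, abs_le]
      constructor
      · rintro ⟨h1, h2, h3, h4⟩; exact ⟨h1, h2, by linarith, by linarith⟩
      · rintro ⟨h1, h2, h3, h4⟩; exact ⟨h1, h2, by linarith, by linarith⟩
    rw [this]
    exact (convex_halfSpace_re_ge _).inter ((convex_halfSpace_re_le _).inter
      ((convex_halfSpace_im_le _).inter (convex_halfSpace_im_ge _)))
  -- real part of w on E
  have hwre : ∀ z ∈ E, K ^ 2 / (4 * a) ≤ (w z).re := by
    intro z hz
    obtain ⟨h1, h2, h3⟩ := hz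
    rw [abs_le] at h3
    have hre : (w z).re = 1 - (z.re ^ 2 - z.im ^ 2) / a := by
      simp only [hw, Complex.sub_re, Complex.one_re]
      rw [div_eq_mul_inv, ← Complex.ofReal_inv]
      simp [pow_two, Complex.mul_re, Complex.mul_im]
      ring
    rw [hre]
    have hx2 : z.re ^ 2 ≤ (L + 1) ^ 2 := by nlinarith
    have hy2 : (K - 1) ^ 2 ≤ z.im ^ 2 := by nlinarith
    have hdiff : K ^ 2 / 4 ≤ (K - 1) ^ 2 - (L + 1) ^ 2 := by nlinarith
    have h5 : 1 - (z.re ^ 2 - z.im ^ 2) / a = (a - (z.re ^ 2 - z.im ^ 2)) / a := by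
      field_simp
    have h6 : K ^ 2 / (4 * a) = (K ^ 2 / 4) / a := by ring
    rw [h5, h6]
    gcongr
    nlinarith
  have hwslit : ∀ z ∈ E, w z ∈ Complex.slitPlane := fun z hz =>
    Complex.mem_slitPlane_iff.2 (Or.inl (lt_of_lt_of_le (by positivity) (hwre z hz)))
  have hanec : (a:ℂ) ≠ 0 := by exact_mod_cast ha.ne'
  have hTderiv : ∀ z ∈ E, HasDerivAt T ((w z)⁻¹ * (2 * z / (a:ℂ))) z := by
    intro z hz
    have h1 : HasDerivAt w (-(2 * z / (a:ℂ))) z := by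
      have hp : HasDerivAt (fun y : ℂ => y ^ 2 / (a:ℂ)) ((2:ℕ) * z ^ 1 / (a:ℂ)) z :=
        (hasDerivAt_pow 2 z).div_const _
      have h := hp.const_sub 1
      norm_num at h
      exact h
    have h2 : HasDerivAt Complex.log (w z)⁻¹ (w z) := Complex.hasDerivAt_log (hwslit z hz)
    have h3 := (h2.comp z h1).neg.sub_const ((K:ℂ) * Complex.I)
    simp only [Function.comp_def, mul_neg, neg_neg] at h3
    exact h3
  have hTbound : ∀ z ∈ E, ‖(w z)⁻¹ * (2 * z / (a:ℂ))‖ ≤ 16 / K := by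
    intro z hz
    obtain ⟨h1, h2, h3⟩ := hz
    rw [abs_le] at h3
    have hzabs : ‖z‖ ≤ 2 * K := by
      have hri := Complex.norm_le_abs_re_add_abs_im z
      have hr : |z.re| ≤ L + 1 := abs_le.2 ⟨by linarith, by linarith⟩
      have hi : |z.im| ≤ K + 1 := abs_le.2 ⟨by linarith, by linarith⟩
      linarith
    have hwz : K ^ 2 / (4 * a) ≤ ‖w z‖ :=
      le_trans (hwre z ⟨h1, h2, abs_le.2 h3⟩) (Complex.re_le_norm _)
    have hwzpos : 0 < K ^ 2 / (4 * a) := by positivity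
    rw [norm_mul, norm_inv]
    have hn1 : ‖w z‖ = ‖w z‖ := rfl
    have hn2 : ‖2 * z / (a:ℂ)‖ = 2 * ‖z‖ / a := by
      rw [norm_div, norm_mul]
      simp [Complex.norm_real, abs_of_pos ha]
    rw [hn1, hn2]
    have hinv : (‖w z‖)⁻¹ ≤ (K ^ 2 / (4 * a))⁻¹ :=
      inv_anti₀ hwzpos hwz
    have hfrac : 2 * ‖z‖ / a ≤ 4 * K / a := by
      rw [div_le_div_iff₀ (by positivity) (by positivity)]
      nlinarith
    calc (‖w z‖)⁻¹ * (2 * ‖z‖ / a)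
        ≤ (K ^ 2 / (4 * a))⁻¹ * (4 * K / a) := by
          apply mul_le_mul hinv hfrac (by positivity) (by positivity)
      _ = 16 / K := by
          field_simp
          ring
  have hlip : ∀ x ∈ E, ∀ y ∈ E, ‖T y - T x‖ ≤ (16 / K) * ‖y - x‖ := by
    intro x hx y hy
    exact hEconv.norm_image_sub_le_of_norm_hasDerivWithin_le
      (fun z hz => (hTderiv z hz).hasDerivWithinAt) (fun z hz => hTbound z hz) hx hy
  -- the centers
  set c0 : ℂ := -((K:ℂ) * Complex.I) with hc0
  have hc0E : c0 ∈ E := by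
    refine ⟨?_, ?_, ?_⟩ <;> simp [hc0] <;> linarith
  have hwc0 : w c0 = ((1 + K ^ 2 / a : ℝ) : ℂ) := by
    simp only [hw, hc0]
    push_cast
    rw [show (-((K:ℂ) * Complex.I)) ^ 2 = ((K:ℂ)) ^ 2 * Complex.I ^ 2 by ring, Complex.I_sq]
    ring
  have hTc0 : T c0 = -(L:ℂ) - (K:ℂ) * Complex.I := by
    rw [hT]
    simp only
    rw [hwc0, ← Complex.ofReal_log (by positivity : (0:ℝ) ≤ 1 + K ^ 2 / a)]
  set c : ℂ := -(L:ℂ) - (K:ℂ) * Complex.I with hc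
  have hcre : c.re = -L := by simp [hc]
  have hcim : c.im = -K := by simp [hc]
  have hcE : c ∈ E := by
    refine ⟨?_, ?_, ?_⟩
    · rw [hcre]; linarith
    · rw [hcre]; linarith
    · rw [hcim]; simp
  have hcc0 : ‖c - c0‖ = L := by
    have : c - c0 = ((-L : ℝ) : ℂ) := by
      rw [hc, hc0]
      push_cast
      ring
    rw [this, Complex.norm_real, Real.norm_eq_abs, abs_of_nonpos (by linarith : -L ≤ 0)]
    ring
  have hTcc : ‖T c - c‖ ≤ 3 / 4 := by
    have h1 : ‖T c - T c0‖ ≤ (16 / K) * ‖c - c0‖ := hlip c0 hc0E c hcE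
    rw [hTc0, hcc0] at h1
    have : (16 / K) * L ≤ 3 / 4 := by
      rw [div_mul_eq_mul_div, div_le_div_iff₀ hK0 (by norm_num)]
      linarith
    calc ‖T c - c‖ ≤ (16 / K) * L := h1
      _ ≤ 3 / 4 := this
  set B : Set ℂ := Metric.closedBall c 1 with hB
  have hBE : B ⊆ E := by
    intro z hz
    rw [hB, Metric.mem_closedBall, Complex.dist_eq] at hz
    have hre := Complex.abs_re_le_norm (z - c)
    have him := Complex.abs_im_le_norm (z - c)
    rw [Complex.sub_re, hcre] at hre
    rw [Complex.sub_im, hcim] at him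
    rw [abs_le] at hre him
    refine ⟨by obtain ⟨p, q⟩ := hre; linarith, by obtain ⟨p, q⟩ := hre; linarith, ?_⟩
    rw [abs_le]
    constructor <;> [skip; skip] <;> obtain ⟨p, q⟩ := him <;> linarith
  have hK16 : 16 / K ≤ 1 / 4 := by
    rw [div_le_div_iff₀ hK0 (by norm_num)]
    linarith
  have hmaps : Set.MapsTo T B B := by
    intro z hz
    have hzE := hBE hz
    rw [hB, Metric.mem_closedBall, dist_eq_norm] at hz ⊢
    have h1 : ‖T z - T c‖ ≤ (16 / K) * ‖z - c‖ := hlip c hcE z hzE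
    have h2 : ‖T z - c‖ ≤ ‖T z - T c‖ + ‖T c - c‖ :=
      norm_sub_le_norm_sub_add_norm_sub _ _ _
    have h3 : (16 / K) * ‖z - c‖ ≤ 1 / 4 := by
      calc (16 / K) * ‖z - c‖ ≤ (1 / 4) * 1 := mul_le_mul hK16 hz (norm_nonneg _) (by norm_num)
        _ = 1 / 4 := by norm_num
    linarith
  have hBc : IsComplete B := (Metric.isClosed_closedBall).isComplete
  have hlipon : LipschitzOnWith (1/4 : NNReal) T B := by
    rw [lipschitzOnWith_iff_dist_le_mul]
    intro x hx y hy
    rw [dist_eq_norm, dist_eq_norm]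
    calc ‖T x - T y‖ ≤ (16 / K) * ‖x - y‖ := hlip y (hBE hy) x (hBE hx)
      _ ≤ ((1/4 : NNReal) : ℝ) * ‖x - y‖ := by
          apply mul_le_mul_of_nonneg_right _ (norm_nonneg _)
          push_cast
          exact hK16
  have hcontr : ContractingWith (1/4 : NNReal) (hmaps.restrict T B B) := by
    refine ⟨?_, hlipon.mapsToRestrict hmaps⟩
    rw [← NNReal.coe_lt_coe]
    norm_num
  have hcB : c ∈ B := Metric.mem_closedBall_self (by norm_num)
  obtain ⟨lam, hlamB, hfix, -, -⟩ :=
    hcontr.exists_fixedPoint' hBc hmaps hcB (edist_ne_top _ _)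
  have hlamE : lam ∈ E := hBE hlamB
  -- bounds on lam
  have hlre : lam.re ≤ -1 := by
    rw [hB, Metric.mem_closedBall, Complex.dist_eq] at hlamB
    have hre := Complex.abs_re_le_norm (lam - c)
    rw [Complex.sub_re, hcre, abs_le] at hre
    obtain ⟨p, q⟩ := hre
    linarith
  have hlim : lam.im < 0 := by
    obtain ⟨-, -, h3⟩ := hlamE
    rw [abs_le] at h3
    obtain ⟨p, q⟩ := h3
    linarith
  have hlne : lam ≠ 0 := by
    intro h0
    rw [h0] at hlim
    simp at hlim
  -- lam is a root
  have hwne : w lam ≠ 0 := Complex.slitPlane_ne_zero (hwslit lam hlamE)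
  have hfix' : lam = -Complex.log (w lam) - (K:ℂ) * Complex.I := by
    conv_lhs => rw [← hfix]
  have hexpK : Complex.exp ((K:ℂ) * Complex.I) = 1 := by
    have := Complex.exp_int_mul_two_pi_mul_I (k : ℤ)
    rw [show ((K:ℂ) * Complex.I) = ((k:ℤ) : ℂ) * (2 * (Real.pi:ℂ) * Complex.I) by
      rw [hKk]; push_cast; ring]
    exact this
  have hexp : Complex.exp (-lam) = w lam := by
    have : -lam = Complex.log (w lam) + (K:ℂ) * Complex.I := by
      linear_combination -hfix'
    rw [this, Complex.exp_add, Complex.exp_log hwne, hexpK, mul_one]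
  have heq : lam ^ 2 = (a:ℂ) * (1 - Complex.exp (-lam)) := by
    rw [hexp]
    have hwl : w lam = 1 - lam ^ 2 / (a:ℂ) := rfl
    rw [hwl]
    have : (a:ℂ) * (lam ^ 2 / (a:ℂ)) = lam ^ 2 := mul_div_cancel₀ _ hanec
    rw [show (1:ℂ) - (1 - lam ^ 2 / (a:ℂ)) = lam ^ 2 / (a:ℂ) by ring]
    rw [this]
  exact ⟨lam, (mem_charRoots_iff ha).2 ⟨hlne, heq⟩, hlre⟩

lemma root_re_neg {a : ℝ} (ha : 0 < a) {lam : ℂ} (h : lam ∈ charRoots a)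
    (him : lam.im ≠ 0) : lam.re < 0 := by
  by_contra hc
  push_neg at hc
  rcases lt_or_gt_of_ne him with hneg | hpos
  · have hconj := conj_root ha h
    apply no_root_re_nonneg_im_pos ha hconj
    · simpa using hc
    · simpa using hneg
  · exact no_root_re_nonneg_im_pos ha h hc hpos

lemma root_im_big {a : ℝ} (ha : 0 < a) {lam : ℂ} (h : lam ∈ charRoots a)
    (him : lam.im ≠ 0) : Real.pi ≤ |lam.im| := by
  rcases lt_or_gt_of_ne him with hneg | hpos
  · have hconj := conj_root ha h
    have : Real.pi < ((starRingEnd ℂ) lam).im := by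
      apply root_im_not_small ha hconj
      simpa using hneg
    rw [Complex.conj_im] at this
    rw [abs_of_neg hneg]
    linarith
  · rw [abs_of_pos hpos]
    exact (root_im_not_small ha h hpos).le

lemma gap_bound {a : ℝ} (ha : 0 < a) : ∃ b : ℝ, b < 0 ∧ -1 ≤ b ∧
    ∀ lam ∈ charRoots a, lam.im ≠ 0 → lam.re ≤ b := by
  set R : Set ℂ := {z : ℂ | z ^ 2 = a * (1 - Complex.exp (-z)) ∧
      -1 ≤ z.re ∧ z.re ≤ 0 ∧ Real.pi ≤ |z.im|} with hR
  have hpi := Real.pi_gt_three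
  have hRroot : ∀ z ∈ R, z ∈ charRoots a ∧ z.im ≠ 0 := by
    intro z hz
    obtain ⟨h1, h2, h3, h4⟩ := hz
    have him : z.im ≠ 0 := by
      intro h0
      rw [h0] at h4
      simp at h4
      linarith
    have hz0 : z ≠ 0 := by
      intro h0
      apply him
      rw [h0]
      simp
    exact ⟨(mem_charRoots_iff ha).2 ⟨hz0, h1⟩, him⟩
  have hclosed : IsClosed R := by
    have c1 : IsClosed {z : ℂ | z ^ 2 = a * (1 - Complex.exp (-z))} :=
      isClosed_eq (by fun_prop) (by fun_prop)
    have c2 : IsClosed {z : ℂ | -1 ≤ z.re} :=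
      isClosed_le continuous_const Complex.continuous_re
    have c3 : IsClosed {z : ℂ | z.re ≤ 0} :=
      isClosed_le Complex.continuous_re continuous_const
    have c4 : IsClosed {z : ℂ | Real.pi ≤ |z.im|} :=
      isClosed_le continuous_const (continuous_abs.comp Complex.continuous_im)
    have : R = {z : ℂ | z ^ 2 = a * (1 - Complex.exp (-z))} ∩
        ({z : ℂ | -1 ≤ z.re} ∩ ({z : ℂ | z.re ≤ 0} ∩ {z : ℂ | Real.pi ≤ |z.im|})) := by
      ext z
      simp only [hR, Set.mem_setOf_eq, Set.mem_inter_iff]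
    rw [this]
    exact c1.inter (c2.inter (c3.inter c4))
  have hsub : R ⊆ Metric.closedBall 0 (a + 3) := by
    intro z hz
    obtain ⟨h1, h2, h3, h4⟩ := hz
    rw [Metric.mem_closedBall, dist_zero_right]
    have habs : ‖z‖ ^ 2 = ‖z ^ 2‖ := by rw [norm_pow]
    have hexp : ‖Complex.exp (-z)‖ ≤ 3 := by
      rw [Complex.norm_exp]
      have : (-z).re ≤ 1 := by simp [Complex.neg_re]; linarith
      calc Real.exp ((-z).re) ≤ Real.exp 1 := Real.exp_le_exp.2 this
        _ ≤ 3 := by linarith [Real.exp_one_lt_d9]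
    have hrhs : ‖z ^ 2‖ ≤ a * 4 := by
      rw [h1, norm_mul]
      have h5 : ‖((a:ℂ))‖ = a := by
        rw [Complex.norm_real, Real.norm_of_nonneg ha.le]
      have h6 : ‖1 - Complex.exp (-z)‖ ≤ 4 := by
        calc ‖1 - Complex.exp (-z)‖
            ≤ ‖(1:ℂ)‖ + ‖Complex.exp (-z)‖ := by
              apply norm_sub_le
          _ ≤ 4 := by rw [norm_one]; linarith
      rw [h5]
      nlinarith [norm_nonneg (1 - Complex.exp (-z))]
    have : ‖z‖ ^ 2 ≤ a * 4 := by rw [habs]; exact hrhs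
    have hn : ‖z‖ = ‖z‖ := rfl
    rw [hn]
    nlinarith [norm_nonneg z]
  have hcomp : IsCompact R :=
    (isCompact_closedBall (0:ℂ) (a+3)).of_isClosed_subset hclosed hsub
  rcases R.eq_empty_or_nonempty with hem | hne
  · refine ⟨-1, by norm_num, le_refl _, ?_⟩
    intro lam hmem him
    by_contra hgt
    push_neg at hgt
    have hlt := root_re_neg ha hmem him
    have : lam ∈ R := ⟨((mem_charRoots_iff ha).1 hmem).2, by linarith, by linarith,
      root_im_big ha hmem him⟩
    rw [hem] at this
    exact this
  · obtain ⟨mu, hmuR, hmax⟩ := hcomp.exists_isMaxOn hne Complex.continuous_re.continuousOn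
    obtain ⟨hmuroot, hmuim⟩ := hRroot mu hmuR
    refine ⟨mu.re, root_re_neg ha hmuroot hmuim, hmuR.2.1, ?_⟩
    intro lam hmem him
    have hlt := root_re_neg ha hmem him
    rcases le_or_gt lam.re (-1) with hle | hgt
    · linarith [hmuR.2.1]
    · have : lam ∈ R := ⟨((mem_charRoots_iff ha).1 hmem).2, hgt.le, hlt.le,
        root_im_big ha hmem him⟩
      exact hmax this

/-- If `a > 0` then `v₀(a) > 0`, `v₀(a)` is a simple root of `h_a`, it is the unique root
with real part `v₀(a)`, and `v₁(a) < 0`: every other root has strictly negative real part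
bounded away from `0`. -/
theorem charRoots_pos_case (a : ℝ) (ha : 0 < a) :
    0 < v0 a ∧
    ((v0 a : ℂ) ∈ charRoots a) ∧
    deriv (charFn a) (v0 a : ℂ) ≠ 0 ∧
    (∀ lam ∈ charRoots a, lam.re = v0 a → lam = (v0 a : ℂ)) ∧
    v1 a < 0 ∧
    (∀ lam ∈ charRoots a, lam ≠ (v0 a : ℂ) → lam.re ≤ v1 a) := by
  obtain ⟨x0, hx0pos, hx0eq⟩ := exists_x0 ha
  have hx0mem : (x0:ℂ) ∈ charRoots a := by
    rw [mem_charRoots_iff ha]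
    refine ⟨by exact_mod_cast hx0pos.ne', ?_⟩
    exact_mod_cast congrArg (Complex.ofReal) hx0eq
  have hbdd : ∀ x ∈ Complex.re '' charRoots a, x ≤ x0 := by
    rintro x ⟨lam, hlam, rfl⟩
    exact roots_re_le ha hx0mem hlam
  have hmemim : x0 ∈ Complex.re '' charRoots a := ⟨(x0:ℂ), hx0mem, by simp⟩
  have hv0 : v0 a = x0 :=
    le_antisymm (csSup_le ⟨x0, hmemim⟩ hbdd) (le_csSup ⟨x0, hbdd⟩ hmemim)
  obtain ⟨b, hb0, hbm1, hbbound⟩ := gap_bound ha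
  obtain ⟨mu, hmuroot, hmure⟩ := exists_neg_root ha
  set S := {x : ℝ | ∃ lam ∈ charRoots a, lam.re = x ∧ x < v0 a} with hS
  have hmuS : mu.re ∈ S := ⟨mu, hmuroot, rfl, by rw [hv0]; linarith⟩
  have hSb : ∀ x ∈ S, x ≤ b := by
    rintro x ⟨lam, hlam, rfl, hlt⟩
    by_cases him : lam.im = 0
    · exfalso
      have hlamval : lam = ((lam.re : ℝ) : ℂ) := by
        apply Complex.ext
        · simp
        · simp [him]
      have : lam.re = x0 := real_root_unique ha (hlamval ▸ hlam) hx0mem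
      rw [hv0] at hlt
      linarith
    · exact hbbound lam hlam him
  have hv1b : v1 a ≤ b := csSup_le ⟨mu.re, hmuS⟩ hSb
  refine ⟨by rw [hv0]; exact hx0pos, by rw [hv0]; exact hx0mem,
    by rw [hv0]; exact deriv_charFn_ne ha hx0mem, ?_, by linarith, ?_⟩
  · intro lam hlam hre
    rw [hv0] at hre ⊢
    exact root_on_line_eq ha hx0mem hlam hre
  · intro lam hlam hne
    have hle : lam.re ≤ x0 := roots_re_le ha hx0mem hlam
    have hlt : lam.re < v0 a := by
      rw [hv0]
      rcases eq_or_lt_of_le hle with heq | hlt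
      · exact absurd (root_on_line_eq ha hx0mem hlam heq) (by rw [hv0] at hne; exact hne)
      · exact hlt
    exact le_csSup ⟨b, hSb⟩ ⟨lam, hlam, rfl, hlt⟩
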